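/- Let n > 1 and r ≥ 0 with 2r < n, and let U = ⋃_{k∈ℤ}[nk−r, nk]. The unique strictly increasing map δ : ℤ → ℤ with δ(0) = 0 and image U is given by δ((r+1)j − i) = nj − i for j ∈ ℤ and i ∈ {0,...,r}, and δ is a pseudomorphism of additive groups: δ is injective, δ(0) = 0, and whenever δ(m) + δ(m') ∈ U, one has δ(m + m') = δ(m) + δ(m'). -/

import Mathlib

/-- A subset `U` of an additive commutative group containing `0` is ring-supporting if
for all `u, v, w ∈ U` with `u + v + w ∈ U`, one has `u + v ∈ U ↔ v + w ∈ U`. -/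
def AddRingSupporting {A : Type*} [AddCommGroup A] (U : Set A) : Prop :=
  (0 : A) ∈ U ∧ ∀ u ∈ U, ∀ v ∈ U, ∀ w ∈ U, u + v + w ∈ U → (u + v ∈ U ↔ v + w ∈ U)

/-- The stabilizer `(U : U) = {a | a + U = U}` of a subset `U` of an additive group. -/
def AddStab {A : Type*} [AddCommGroup A] (U : Set A) : Set A :=
  {a : A | (a + ·) '' U = U}

/-- The explicit enumeration map. -/
def enumF (n r m : ℤ) : ℤ := m + (n - r - 1) * ((m + r) / (r + 1))

lemma enumF_eval (n r : ℤ) (hr : 0 ≤ r) (j i : ℤ) (hi0 : 0 ≤ i) (hir : i ≤ r) :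
    enumF n r ((r + 1) * j - i) = n * j - i := by
  have hq : ((r + 1) * j - i + r) / (r + 1) = j := by
    have h1 : (r + 1) * j - i + r = (r - i) + j * (r + 1) := by ring
    rw [h1, Int.add_mul_ediv_right _ _ (by omega : r + 1 ≠ 0),
      Int.ediv_eq_zero_of_lt (by omega) (by omega), zero_add]
  unfold enumF
  rw [hq]; ring

lemma enumF_rep (r : ℤ) (hr : 0 ≤ r) (m : ℤ) :
    ∃ j i : ℤ, 0 ≤ i ∧ i ≤ r ∧ m = (r + 1) * j - i := by
  refine ⟨(m + r) / (r + 1), r - (m + r) % (r + 1), ?_, ?_, ?_⟩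
  · have := Int.emod_lt_of_pos (m + r) (by omega : (0:ℤ) < r + 1); omega
  · have := Int.emod_nonneg (m + r) (by omega : r + 1 ≠ 0); omega
  · have := Int.mul_ediv_add_emod (m + r) (r + 1); omega

lemma enumF_mono (n r : ℤ) (hr : 0 ≤ r) (h2 : 2 * r < n) : StrictMono (enumF n r) := by
  have hrn : r < n := by omega
  apply strictMono_int_of_lt_succ
  intro m
  obtain ⟨j, i, hi0, hir, rfl⟩ := enumF_rep r hr m
  rcases eq_or_lt_of_le hi0 with h | h
  · subst h
    have h1 : (r + 1) * j - 0 + 1 = (r + 1) * (j + 1) - r := by ring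
    rw [h1, enumF_eval n r hr (j + 1) r hr le_rfl,
      enumF_eval n r hr j 0 le_rfl hr]
    have : n * (j + 1) = n * j + n := by ring
    omega
  · have h1 : (r + 1) * j - i + 1 = (r + 1) * j - (i - 1) := by ring
    rw [h1, enumF_eval n r hr j (i - 1) (by omega) (by omega),
      enumF_eval n r hr j i hi0 hir]
    omega

lemma enumF_range (n r : ℤ) (hr : 0 ≤ r) :
    Set.range (enumF n r) = {x : ℤ | ∃ k : ℤ, n * k - r ≤ x ∧ x ≤ n * k} := by
  ext x
  constructor
  · rintro ⟨m, rfl⟩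
    obtain ⟨j, i, hi0, hir, rfl⟩ := enumF_rep r hr m
    rw [enumF_eval n r hr _ _ hi0 hir]
    exact ⟨j, by omega, by omega⟩
  · rintro ⟨k, h1, h2⟩
    exact ⟨(r + 1) * k - (n * k - x), by
      rw [enumF_eval n r hr _ _ (by omega) (by omega)]; ring⟩

/-- A strictly monotone map ℤ → ℤ is determined by its range and one value. -/
lemma strictMono_eq_of_range (f g : ℤ → ℤ) (hf : StrictMono f) (hg : StrictMono g)
    (hr : Set.range f = Set.range g) (h0 : f 0 = g 0) : f = g := by
  have key : ∀ m : ℤ, f m = g m := by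
    intro m
    induction m using Int.induction_on with
    | zero => exact h0
    | succ m ih =>
      have h1 : f (m + 1) ∈ Set.range g := hr ▸ Set.mem_range_self _
      have h2 : g (m + 1) ∈ Set.range f := hr ▸ Set.mem_range_self _
      obtain ⟨k, hk⟩ := h1
      obtain ⟨l, hl⟩ := h2
      have hk' : m < k := hg.lt_iff_lt.mp (by rw [hk, ← ih]; exact hf (by omega))
      have hl' : m < l := hf.lt_iff_lt.mp (by rw [hl, ih]; exact hg (by omega))
      have := hg.le_iff_le.mpr (by omega : m + 1 ≤ k)
      have := hf.le_iff_le.mpr (by omega : m + 1 ≤ l)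
      omega
    | pred m ih =>
      have h1 : f (-m - 1) ∈ Set.range g := hr ▸ Set.mem_range_self _
      have h2 : g (-m - 1) ∈ Set.range f := hr ▸ Set.mem_range_self _
      obtain ⟨k, hk⟩ := h1
      obtain ⟨l, hl⟩ := h2
      have hk' : k < -m := hg.lt_iff_lt.mp (by rw [hk, ← ih]; exact hf (by omega))
      have hl' : l < -m := hf.lt_iff_lt.mp (by rw [hl, ih]; exact hg (by omega))
      have := hg.le_iff_le.mpr (by omega : k ≤ -m - 1)
      have := hf.le_iff_le.mpr (by omega : l ≤ -m - 1)
      omega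
  exact funext key

theorem enumeration_is_pseudomorphism (n r : ℤ) (hn : 1 < n) (hr : 0 ≤ r)
    (h2 : 2 * r < n) (δ : ℤ → ℤ) (hmono : StrictMono δ) (h0 : δ 0 = 0)
    (hrange : Set.range δ = {x : ℤ | ∃ k : ℤ, n * k - r ≤ x ∧ x ≤ n * k}) :
    (∀ j i : ℤ, 0 ≤ i → i ≤ r → δ ((r + 1) * j - i) = n * j - i) ∧
    Function.Injective δ ∧
    (∀ m m' : ℤ, δ m + δ m' ∈ {x : ℤ | ∃ k : ℤ, n * k - r ≤ x ∧ x ≤ n * k} →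
      δ (m + m') = δ m + δ m') := by
  have hδ : δ = enumF n r := by
    apply strictMono_eq_of_range δ (enumF n r) hmono (enumF_mono n r hr h2)
      (hrange.trans (enumF_range n r hr).symm)
    rw [h0]
    have := enumF_eval n r hr 0 0 le_rfl hr
    simpa using this.symm
  subst hδ
  refine ⟨fun j i hi0 hir => enumF_eval n r hr j i hi0 hir,
    (enumF_mono n r hr h2).injective, ?_⟩
  intro m m' hmem
  obtain ⟨j, i, hi0, hir, rfl⟩ := enumF_rep r hr m
  obtain ⟨j', i', hi0', hir', rfl⟩ := enumF_rep r hr m'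
  rw [enumF_eval n r hr _ _ hi0 hir, enumF_eval n r hr _ _ hi0' hir'] at hmem ⊢
  obtain ⟨k, hk1, hk2⟩ := hmem
  have hsum : n * j - i + (n * j' - i') = n * (j + j') - (i + i') := by ring
  rw [hsum] at hk1 hk2
  -- show k = j + j'
  have e1 : n * (j + j' - 1) = n * (j + j') - n := by ring
  have e2 : n * (j + j' + 1) = n * (j + j') + n := by ring
  have hlb : n * (j + j' - 1) < n * k := by linarith
  have hub : n * k < n * (j + j' + 1) := by linarith
  have hk : k = j + j' := by
    have h1 : k < j + j' + 1 := lt_of_mul_lt_mul_left hub (by omega)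
    have h2 : j + j' - 1 < k := lt_of_mul_lt_mul_left hlb (by omega)
    omega
  subst hk
  have hii : i + i' ≤ r := by linarith
  have harg : (r + 1) * j - i + ((r + 1) * j' - i') = (r + 1) * (j + j') - (i + i') := by
    ring
  rw [harg, enumF_eval n r hr _ _ (by omega) hii]
  ring
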